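/- Let k ≥ 1 be an integer and let p be a prime coprime to 2k+1 such that p² ≢ 1 (mod q) for every prime q dividing 2k+1 (equivalently, p² ≢ 1 (mod d) for every divisor d > 1 of 2k+1). Then for any primitive (2k+1)-th root of unity ζ in an algebraic closure of 𝔽_p and every 1 ≤ i ≤ k, the element ζ^{i} + ζ^{−i} does not lie in (the image of) the prime field 𝔽_p. -/
import Mathlib


/-- Main step in the proof of Proposition 3.2, in finite-field form: if `p` is a prime
coprime to `2k+1` with `p² ≢ 1 (mod q)` for every prime `q ∣ 2k+1`, then for any primitive
`(2k+1)`-th root of unity `ζ` in an algebraic closure of `𝔽_p`, the elements `ζⁱ + ζ⁻ⁱ`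
(for `1 ≤ i ≤ k`) do not lie in the prime field `𝔽_p`. -/
theorem zeta_pow_add_zeta_pow_neg_not_in_prime_field
    (k : ℕ) (hk : 1 ≤ k)
    (p : ℕ) [Fact p.Prime] (hcop : Nat.Coprime p (2 * k + 1))
    (hq : ∀ q : ℕ, q.Prime → q ∣ 2 * k + 1 → ¬ (p ^ 2 ≡ 1 [MOD q]))
    (ζ : AlgebraicClosure (ZMod p))
    (hζ : IsPrimitiveRoot ζ (2 * k + 1)) :
    ∀ i ∈ Finset.Icc 1 k, ∀ c : ZMod p,
      algebraMap (ZMod p) (AlgebraicClosure (ZMod p)) c ≠ ζ ^ (i : ℤ) + ζ ^ (-(i : ℤ)) := by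
  intro i hi c hc
  rw [Finset.mem_Icc] at hi
  obtain ⟨hi1, hik⟩ := hi
  have hp := (Fact.out : p.Prime)
  have hn : (2 * k + 1) ≠ 0 := by omega
  have hζ0 : ζ ≠ 0 := hζ.ne_zero hn
  -- Frobenius fixes elements of the prime field
  have key : ζ ^ ((i : ℤ) * p) + ζ ^ (-(i : ℤ) * p) = ζ ^ (i : ℤ) + ζ ^ (-(i : ℤ)) := by
    have h1 : (algebraMap (ZMod p) (AlgebraicClosure (ZMod p)) c) ^ p
        = algebraMap (ZMod p) (AlgebraicClosure (ZMod p)) c := by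
      rw [← map_pow, ZMod.pow_card]
    rw [hc, add_pow_char] at h1
    rw [← h1, ← zpow_natCast (ζ ^ (i : ℤ)), ← zpow_natCast (ζ ^ (-(i : ℤ))),
      ← zpow_mul, ← zpow_mul]
  set a := ζ ^ ((i : ℤ) * p) with ha_def
  set b := ζ ^ (i : ℤ) with hb_def
  have ha0 : a ≠ 0 := zpow_ne_zero _ hζ0
  have hb0 : b ≠ 0 := zpow_ne_zero _ hζ0
  have hainv : ζ ^ (-(i : ℤ) * p) = a⁻¹ := by rw [ha_def, ← zpow_neg, neg_mul]
  have hbinv : ζ ^ (-(i : ℤ)) = b⁻¹ := by rw [hb_def, ← zpow_neg]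
  rw [hainv, hbinv] at key
  have hfac : (a - b) * (a * b - 1) = 0 := by
    have h := key
    field_simp at h
    linear_combination h
  -- In either case, (2k+1) ∣ i * (p² - 1) over ℤ
  have hdvdZ : ((2 * k + 1 : ℕ) : ℤ) ∣ (i : ℤ) * ((p : ℤ) ^ 2 - 1) := by
    rcases mul_eq_zero.mp hfac with h | h
    · have hab : a = b := sub_eq_zero.mp h
      have h1 : ζ ^ ((i : ℤ) * p - i) = 1 := by
        rw [zpow_sub₀ hζ0, ← ha_def, ← hb_def, hab, div_self hb0]
      have h2 := (hζ.zpow_eq_one_iff_dvd _).mp h1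
      have : (i : ℤ) * p - i = (i : ℤ) * ((p : ℤ) - 1) := by ring
      rw [this] at h2
      exact Dvd.dvd.trans h2 ⟨(p : ℤ) + 1, by ring⟩
    · have hab : a * b = 1 := sub_eq_zero.mp h
      have h1 : ζ ^ ((i : ℤ) * p + i) = 1 := by
        rw [zpow_add₀ hζ0, ← ha_def, ← hb_def, hab]
      have h2 := (hζ.zpow_eq_one_iff_dvd _).mp h1
      have : (i : ℤ) * p + i = (i : ℤ) * ((p : ℤ) + 1) := by ring
      rw [this] at h2
      exact Dvd.dvd.trans h2 ⟨(p : ℤ) - 1, by ring⟩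
  -- Convert to ℕ
  have hp1 : 1 ≤ p ^ 2 := Nat.one_le_pow _ _ hp.pos
  have hdvd : (2 * k + 1) ∣ i * (p ^ 2 - 1) := by
    have : ((i * (p ^ 2 - 1) : ℕ) : ℤ) = (i : ℤ) * ((p : ℤ) ^ 2 - 1) := by
      push_cast [hp1]
      ring
    exact_mod_cast this ▸ hdvdZ
  -- Number theory: find prime q ∣ 2k+1 with p² ≡ 1 mod q
  set n := 2 * k + 1 with hn_def
  set g := Nat.gcd n i with hg_def
  have hi0 : i ≠ 0 := by omega
  have hg0 : 0 < g := Nat.gcd_pos_of_pos_right _ (by omega)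
  have hgi : g ≤ i := Nat.le_of_dvd (by omega) (Nat.gcd_dvd_right n i)
  set d := n / g with hd_def
  have hdg : d * g = n := Nat.div_mul_cancel (Nat.gcd_dvd_left n i)
  have hd1 : 1 < d := by
    by_contra hle
    push_neg at hle
    interval_cases d
    · omega
    · omega
  have hdvd' : d ∣ (i / g) * (p ^ 2 - 1) := by
    have h1 : g * d ∣ g * ((i / g) * (p ^ 2 - 1)) := by
      have e1 : g * d = n := by rw [mul_comm]; exact hdg
      have e2 : g * ((i / g) * (p ^ 2 - 1)) = i * (p ^ 2 - 1) := by
        rw [← mul_assoc, Nat.mul_div_cancel' (Nat.gcd_dvd_right n i)]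
      rw [e1, e2]
      exact hdvd
    exact (Nat.mul_dvd_mul_iff_left hg0).mp h1
  have hcopd : Nat.Coprime d (i / g) := Nat.coprime_div_gcd_div_gcd hg0
  have hdp : d ∣ p ^ 2 - 1 := hcopd.dvd_of_dvd_mul_left hdvd'
  set q := d.minFac with hq_def
  have hqp : q.Prime := Nat.minFac_prime (by omega)
  have hqn : q ∣ n := (Nat.minFac_dvd d).trans (Nat.div_dvd_of_dvd (Nat.gcd_dvd_left n i))
  have hq1 : p ^ 2 ≡ 1 [MOD q] :=
    (Nat.modEq_iff_dvd' hp1).mpr ((Nat.minFac_dvd d).trans hdp) |>.symm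
  exact hq q hqp hqn hq1
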